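/- Let k ≥ 1 be an integer and set m := 3^k. Then there exists a nonzero integer a ∈ ℤ not divisible by 3 such that a/m ∈ 𝔉 and every HCF partial quotient of a/m has absolute value at most 8; that is, for every n ≥ 0 with T^n(a/m) ≠ 0 one has |[1/T^n(a/m)]| ≤ 8. -/

import Mathlib

open Complex

/-- The nearest Gaussian integer to a complex number, as a complex number. -/
noncomputable def nearestGaussian (z : ℂ) : ℂ :=
  (⌊z.re + 1 / 2⌋ : ℤ) + (⌊z.im + 1 / 2⌋ : ℤ) * I

/-- The fundamental domain `𝔉 = {z : [z] = 0}`. -/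
noncomputable def Fdom : Set ℂ := {z : ℂ | nearestGaussian z = 0}

/-- The complex Gauss map on the fundamental domain. -/
noncomputable def gaussT (z : ℂ) : ℂ :=
  if z = 0 then 0 else z⁻¹ - nearestGaussian z⁻¹

/-! ### 2×2 integer matrices for continuants -/

@[ext] structure M2 where
  a : ℤ
  b : ℤ
  c : ℤ
  d : ℤ
deriving DecidableEq

def M2.mul (X Y : M2) : M2 :=
  ⟨X.a*Y.a + X.b*Y.c, X.a*Y.b + X.b*Y.d, X.c*Y.a + X.d*Y.c, X.c*Y.b + X.d*Y.d⟩

def M2.t (X : M2) : M2 := ⟨X.a, X.c, X.b, X.d⟩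

def M2.negconj (X : M2) : M2 := ⟨X.a, -X.b, -X.c, X.d⟩

def M2.sm (e : ℤ) (X : M2) : M2 := ⟨e*X.a, e*X.b, e*X.c, e*X.d⟩

def M2.one : M2 := ⟨1,0,0,1⟩

def dm (b : ℤ) : M2 := ⟨0,1,1,b⟩

lemma M2.mul_assoc' (X Y Z : M2) : (X.mul Y).mul Z = X.mul (Y.mul Z) := by
  cases X; cases Y; cases Z
  simp only [M2.mul, M2.mk.injEq]
  refine ⟨by ring, by ring, by ring, by ring⟩

lemma M2.one_mul' (X : M2) : M2.one.mul X = X := by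
  cases X; simp [M2.mul, M2.one]

lemma M2.mul_one' (X : M2) : X.mul M2.one = X := by
  cases X; simp [M2.mul, M2.one]

lemma M2.t_mul (X Y : M2) : (X.mul Y).t = (Y.t).mul (X.t) := by
  cases X; cases Y
  simp only [M2.mul, M2.t, M2.mk.injEq]
  refine ⟨by ring, by ring, by ring, by ring⟩

/-! ### Continuants of digit words -/

def Amat : List ℤ → M2
  | [] => M2.one
  | b :: L => (dm b).mul (Amat L)

def hcont (L : List ℤ) : ℤ := (Amat L).d
def hnum (L : List ℤ) : ℤ := (Amat L).b

lemma Amat_append (L M : List ℤ) : Amat (L ++ M) = (Amat L).mul (Amat M) := by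
  induction L with
  | nil => simp [Amat, M2.one_mul']
  | cons b L ih => simp [Amat, ih, M2.mul_assoc']

lemma Amat_reverse (L : List ℤ) : Amat L.reverse = (Amat L).t := by
  induction L with
  | nil => simp [Amat, M2.one, M2.t]
  | cons b L ih =>
    rw [List.reverse_cons, Amat_append, ih]
    show (Amat L).t.mul ((dm b).mul M2.one) = ((dm b).mul (Amat L)).t
    rw [M2.mul_one', M2.t_mul]
    congr 1

lemma Amat_mapneg (L : List ℤ) :
    Amat (L.map (fun x => -x)) = M2.sm ((-1)^L.length) ((Amat L).negconj) := by
  induction L with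
  | nil => simp [Amat, M2.one, M2.sm, M2.negconj]
  | cons b L ih =>
    simp only [List.map_cons, List.length_cons, Amat]
    rw [ih]
    rcases hA : Amat L with ⟨x, p, y, q⟩
    rw [pow_succ]
    simp only [dm, M2.mul, M2.sm, M2.negconj, M2.mk.injEq]
    refine ⟨by ring, by ring, by ring, by ring⟩

lemma hnum_cons (b : ℤ) (L : List ℤ) : hnum (b :: L) = hcont L := by
  simp [hnum, hcont, Amat, dm, M2.mul]

lemma hcont_cons (b : ℤ) (L : List ℤ) : hcont (b :: L) = b * hcont L + hnum L := by
  simp [hnum, hcont, Amat, dm, M2.mul]; ring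

lemma hcont_snoc (M : List ℤ) (a : ℤ) :
    hcont (M ++ [a]) = (Amat M).c + a * (Amat M).d := by
  rw [hcont, Amat_append]
  rcases Amat M with ⟨x, p, y, q⟩
  simp [Amat, dm, M2.mul, M2.one]
  ring

/-- Folding with middle digit `t`. -/
lemma hcont_fold3 (L : List ℤ) (t : ℤ) :
    hcont (L ++ t :: (L.reverse.map (fun x => -x))) =
      (-1)^L.length * (t * (hcont L)^2) := by
  have h1 : L ++ t :: (L.reverse.map (fun x => -x))
      = L ++ ([t] ++ (L.reverse.map (fun x => -x))) := by simp
  rw [hcont, h1, Amat_append, Amat_append, Amat_mapneg, Amat_reverse,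
    List.length_reverse]
  rcases hA : Amat L with ⟨x, p, y, q⟩
  have hq : hcont L = q := by rw [hcont, hA]
  rw [hq]
  show ((⟨x,p,y,q⟩ : M2).mul (((dm t).mul M2.one).mul
    (M2.sm ((-1)^L.length) ((M2.t ⟨x,p,y,q⟩).negconj)))).d = _
  simp only [dm, M2.mul, M2.one, M2.sm, M2.negconj, M2.t]
  ring

/-- Contracted folding (middle digit `1`). -/
lemma hcont_fold2 (M : List ℤ) (a : ℤ) :
    hcont (M ++ (a+1) :: (a-1) :: M.reverse) = (hcont (M ++ [a]))^2 := by
  rw [hcont_snoc]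
  have h1 : M ++ (a+1) :: (a-1) :: M.reverse
      = M ++ ([a+1] ++ ([a-1] ++ M.reverse)) := by simp
  rw [hcont, h1, Amat_append, Amat_append, Amat_append, Amat_reverse]
  rcases hA : Amat M with ⟨x, p, y, q⟩
  show ((⟨x,p,y,q⟩ : M2).mul (((dm (a+1)).mul M2.one).mul
    (((dm (a-1)).mul M2.one).mul (M2.t ⟨x,p,y,q⟩)))).d = _
  simp only [dm, M2.mul, M2.one, M2.t]
  ring

lemma hcont_coprime (L : List ℤ) : IsCoprime (hnum L) (hcont L) := by
  induction L with
  | nil =>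
    have : hnum ([] : List ℤ) = 0 := rfl
    rw [this]
    exact isCoprime_zero_left.mpr isUnit_one
  | cons b L ih =>
    rw [hnum_cons, hcont_cons]
    have := (ih.symm).add_mul_left_right b
    rwa [add_comm, mul_comm] at this

/-! ### Values of digit words -/

noncomputable def cfv : List ℤ → ℝ
  | [] => 0
  | b :: L => ((b : ℝ) + cfv L)⁻¹

/-- Admissible digit words. -/
def HGood : List ℤ → Prop
  | [] => True
  | b :: L => HGood L ∧ 2 ≤ b.natAbs ∧ b.natAbs ≤ 8 ∧
      (b = 2 → 0 < cfv L) ∧ (b = -2 → cfv L ≤ 0)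

lemma inv_bnd_pos {x : ℝ} (hx : 2 < x) : 0 < x⁻¹ ∧ x⁻¹ < 1/2 := by
  have h0 : 0 < x := by linarith
  constructor
  · positivity
  · rw [inv_lt_iff_one_lt_mul₀ h0]; linarith

lemma inv_bnd_neg {x : ℝ} (hx : x ≤ -2) : -(1/2) ≤ x⁻¹ ∧ x⁻¹ < 0 := by
  have h0 : x < 0 := by linarith
  have h0' : x ≠ 0 := ne_of_lt h0
  have hc : x * x⁻¹ = 1 := mul_inv_cancel₀ h0'
  constructor
  · nlinarith [hc]
  · exact inv_neg''.mpr h0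

lemma hgood_bound : ∀ L : List ℤ, HGood L → -(1/2) ≤ cfv L ∧ cfv L < 1/2 := by
  intro L
  induction L with
  | nil => intro _; norm_num [cfv]
  | cons b L ih =>
    intro hL
    obtain ⟨hG, h2, h8, hp2, hm2⟩ := hL
    obtain ⟨hlo, hhi⟩ := ih hG
    show -(1/2) ≤ ((b:ℝ) + cfv L)⁻¹ ∧ ((b:ℝ) + cfv L)⁻¹ < 1/2
    have hcase : 3 ≤ b ∨ b ≤ -3 ∨ b = 2 ∨ b = -2 := by omega
    rcases hcase with h | h | h | h
    · have : (2:ℝ) < (b:ℝ) + cfv L := by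
        have : (3:ℝ) ≤ (b:ℝ) := by exact_mod_cast h
        linarith
      have := inv_bnd_pos this
      exact ⟨by linarith [this.1], this.2⟩
    · have : (b:ℝ) + cfv L ≤ -2 := by
        have : (b:ℝ) ≤ -3 := by exact_mod_cast h
        linarith
      have := inv_bnd_neg this
      exact ⟨this.1, by linarith [this.2]⟩
    · subst h
      have : (2:ℝ) < (2:ℤ) + cfv L := by
        have := hp2 rfl
        push_cast
        linarith
      have := inv_bnd_pos this
      exact ⟨by linarith [this.1], this.2⟩
    · subst h
      have : ((-2:ℤ):ℝ) + cfv L ≤ -2 := by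
        have := hm2 rfl
        push_cast
        linarith
      have := inv_bnd_neg this
      exact ⟨this.1, by linarith [this.2]⟩

lemma hgood_x_ne {b : ℤ} {L : List ℤ} (h : HGood (b :: L)) :
    (b:ℝ) + cfv L ≠ 0 := by
  obtain ⟨hG, h2, h8, hp2, hm2⟩ := h
  obtain ⟨hlo, hhi⟩ := hgood_bound L hG
  have hcase : 2 ≤ b ∨ b ≤ -2 := by omega
  rcases hcase with h | h
  · have : (2:ℝ) ≤ (b:ℝ) := by exact_mod_cast h
    nlinarith
  · have : (b:ℝ) ≤ -2 := by exact_mod_cast h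
    nlinarith

lemma cfv_cons_ne {b : ℤ} {L : List ℤ} (h : HGood (b :: L)) :
    cfv (b :: L) ≠ 0 := by
  show ((b:ℝ) + cfv L)⁻¹ ≠ 0
  exact inv_ne_zero (hgood_x_ne h)

lemma cfv_mul_hcont : ∀ L : List ℤ, HGood L →
    cfv L * (hcont L : ℝ) = (hnum L : ℝ) ∧ (hcont L : ℤ) ≠ 0 := by
  intro L
  induction L with
  | nil =>
    intro _
    constructor
    · show (0:ℝ) * ((1:ℤ):ℝ) = ((0:ℤ):ℝ); norm_num
    · show (1:ℤ) ≠ 0; norm_num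
  | cons b L ih =>
    intro hL
    have hG := hL.1
    obtain ⟨hm, hne⟩ := ih hG
    have hx := hgood_x_ne hL
    rw [hnum_cons, hcont_cons]
    have hcr : ((b * hcont L + hnum L : ℤ) : ℝ)
        = ((b:ℝ) + cfv L) * (hcont L : ℝ) := by
      push_cast
      rw [add_mul, ← hm]
    constructor
    · show ((b:ℝ) + cfv L)⁻¹ * _ = _
      rw [hcr, ← mul_assoc, inv_mul_cancel₀ hx, one_mul]
    · intro h0
      rw [h0] at hcr
      have : ((b:ℝ) + cfv L) * (hcont L : ℝ) = 0 := by
        rw [← hcr]; norm_num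
      rcases mul_eq_zero.mp this with h | h
      · exact hx h
      · exact hne (by exact_mod_cast h)

lemma hgood_drop : ∀ (n : ℕ) (L : List ℤ), HGood L → HGood (L.drop n) := by
  intro n
  induction n with
  | zero => intro L h; exact h
  | succ n ih =>
    intro L h
    cases L with
    | nil => exact h
    | cons b L => exact ih L h.1

/-! ### The Gauss map on word values -/

lemma floor_half_zero : ⌊(0:ℝ) + 1/2⌋ = 0 := by
  norm_num

lemma nearestGaussian_real_int {b : ℤ} {t : ℝ} (hlo : -(1/2) ≤ t) (hhi : t < 1/2) :
    nearestGaussian (((b:ℝ) + t : ℝ) : ℂ) = (b : ℂ) := by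
  rw [nearestGaussian]
  rw [Complex.ofReal_re, Complex.ofReal_im]
  have h1 : ⌊(b:ℝ) + t + 1/2⌋ = b := by
    rw [add_assoc, Int.floor_intCast_add]
    have : ⌊t + 1/2⌋ = 0 := by
      rw [Int.floor_eq_zero_iff]
      constructor <;> simp <;> linarith
    omega
  rw [h1, floor_half_zero]
  simp

lemma nearestGaussian_small {t : ℝ} (hlo : -(1/2) ≤ t) (hhi : t < 1/2) :
    nearestGaussian ((t : ℝ) : ℂ) = 0 := by
  have := nearestGaussian_real_int (b := 0) hlo hhi
  simpa using this

lemma gaussT_cons {b : ℤ} {L : List ℤ} (h : HGood (b :: L)) :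
    gaussT ((cfv (b :: L) : ℝ) : ℂ) = ((cfv L : ℝ) : ℂ) := by
  have hx := hgood_x_ne h
  have hb := hgood_bound L h.1
  have hvne : cfv (b :: L) ≠ 0 := cfv_cons_ne h
  have hz : ((cfv (b :: L) : ℝ) : ℂ) ≠ 0 := by
    exact_mod_cast Complex.ofReal_ne_zero.mpr hvne
  rw [gaussT, if_neg hz]
  have hinv : (((cfv (b :: L) : ℝ) : ℂ))⁻¹ = (((b:ℝ) + cfv L : ℝ) : ℂ) := by
    rw [← Complex.ofReal_inv]
    congr 1
    show (((b:ℝ) + cfv L)⁻¹)⁻¹ = _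
    rw [inv_inv]
  rw [hinv, nearestGaussian_real_int hb.1 hb.2]
  push_cast
  ring

lemma gaussT_iterate : ∀ (n : ℕ) (L : List ℤ), HGood L →
    gaussT^[n] ((cfv L : ℝ) : ℂ) = ((cfv (L.drop n) : ℝ) : ℂ) := by
  intro n
  induction n with
  | zero => intro L _; simp
  | succ n ih =>
    intro L hL
    rw [Function.iterate_succ_apply]
    cases L with
    | nil =>
      have hz : ((cfv ([] : List ℤ) : ℝ) : ℂ) = 0 := by norm_num [cfv]
      rw [hz]
      have h0 : gaussT 0 = 0 := by simp [gaussT]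
      rw [h0, List.drop_nil, hz]
      have := ih [] hL
      rw [hz] at this
      rw [List.drop_nil, hz] at this
      exact this
    | cons b L =>
      rw [gaussT_cons hL, ih L hL.1]
      rfl

/-! ### Construction of words with continuant ±3^k -/

def StrongW (L : List ℤ) : Prop := ∀ b ∈ L, 3 ≤ b.natAbs ∧ b.natAbs ≤ 8

def PW (k : ℕ) : Prop :=
  ∃ a c Mid, (4 ≤ a.natAbs ∧ a.natAbs ≤ 7) ∧ (4 ≤ c.natAbs ∧ c.natAbs ≤ 7) ∧
    StrongW Mid ∧
    (hcont (a :: Mid ++ [c]) = 3^k ∨ hcont (a :: Mid ++ [c]) = -(3^k))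

lemma PW3 : PW 3 := by
  refine ⟨4, -7, [], ?_, ?_, ?_, ?_⟩
  · decide
  · decide
  · intro b hb; simp at hb
  · right; decide

lemma PW4 : PW 4 := by
  refine ⟨4, -5, [4], ?_, ?_, ?_, ?_⟩
  · decide
  · decide
  · intro b hb; simp at hb; subst hb; decide
  · right; decide

lemma PW5 : PW 5 := by
  refine ⟨5, -7, [-7], ?_, ?_, ?_, ?_⟩
  · decide
  · decide
  · intro b hb; simp at hb; subst hb; decide
  · left; decide

lemma PW_double {k : ℕ} (h : PW k) : PW (2 * k) := by
  obtain ⟨a, c, Mid, ha, hc, hMid, hcont3⟩ := h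
  refine ⟨a, a, Mid ++ (c+1) :: (c-1) :: Mid.reverse, ha, ha, ?_, ?_⟩
  · intro b hb
    simp only [List.mem_append, List.mem_cons, List.mem_reverse] at hb
    rcases hb with h | h | h | h
    · exact hMid b h
    · subst h; omega
    · subst h; omega
    · exact hMid b h
  · have hshape : a :: (Mid ++ (c+1) :: (c-1) :: Mid.reverse) ++ [a]
        = (a :: Mid) ++ (c+1) :: (c-1) :: (a :: Mid).reverse := by
      simp
    rw [hshape, hcont_fold2]
    have hL : (a :: Mid) ++ [c] = a :: Mid ++ [c] := by simp
    rw [hL]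
    left
    have h32 : ((3:ℤ)^k)^2 = 3^(2*k) := by
      rw [← pow_mul, mul_comm]
    rcases hcont3 with h | h
    · rw [h, h32]
    · rw [h, neg_pow, h32]; norm_num

lemma PW_double_succ {k : ℕ} (h : PW k) : PW (2 * k + 1) := by
  obtain ⟨a, c, Mid, ha, hc, hMid, hcont3⟩ := h
  set L : List ℤ := a :: Mid ++ [c] with hLdef
  refine ⟨a, -a, Mid ++ c :: 3 :: (-c) :: (Mid.reverse.map (fun x => -x)),
    ha, by omega, ?_, ?_⟩
  · intro b hb
    simp only [List.mem_append, List.mem_cons, List.mem_map, List.mem_reverse] at hb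
    rcases hb with h | h | h | h | ⟨x, hx, rfl⟩
    · exact hMid b h
    · subst h; omega
    · subst h; decide
    · subst h; omega
    · have := hMid x hx; omega
  · have hshape : a :: (Mid ++ c :: 3 :: (-c) :: (Mid.reverse.map (fun x => -x))) ++ [-a]
        = L ++ 3 :: (L.reverse.map (fun x => -x)) := by
      simp [hLdef]
    rw [hshape, hcont_fold3]
    have hsq : (hcont L)^2 = 3^(2*k) := by
      have h32 : ((3:ℤ)^k)^2 = 3^(2*k) := by rw [← pow_mul, mul_comm]
      rcases hcont3 with h | h
      · rw [hLdef] at h ⊢; rw [h, h32]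
      · rw [hLdef] at h ⊢; rw [h, neg_pow, h32]; norm_num
    rw [hsq]
    have h3 : (3:ℤ) * 3^(2*k) = 3^(2*k+1) := by rw [pow_succ]; ring
    rcases neg_one_pow_eq_or ℤ L.length with h | h
    · rw [h]; left; rw [one_mul, h3]
    · rw [h]; right; rw [h3]; ring

lemma PW_all : ∀ k, 3 ≤ k → PW k := by
  intro k
  induction k using Nat.strong_induction_on with
  | _ k IH =>
    intro h3
    by_cases h6 : k < 6
    · interval_cases k
      · exact PW3
      · exact PW4
      · exact PW5
    · have hj : k / 2 < k := by omega
      have h3j : 3 ≤ k / 2 := by omega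
      have hP := IH _ hj h3j
      rcases Nat.even_or_odd k with he | ho
      · have hk2 : k = 2 * (k / 2) := by
          have := Nat.even_iff.mp he; omega
        rw [hk2]; exact PW_double hP
      · have hk2 : k = 2 * (k / 2) + 1 := by
          have := Nat.odd_iff.mp ho; omega
        rw [hk2]; exact PW_double_succ hP

lemma strong_good : ∀ L : List ℤ, StrongW L → HGood L := by
  intro L hL
  induction L with
  | nil => trivial
  | cons b L ih =>
    have hb := hL b (by simp)
    refine ⟨ih (fun x hx => hL x (by simp [hx])), by omega, by omega, ?_, ?_⟩
    · intro h; subst h; omega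
    · intro h; subst h; omega

lemma exists_word : ∀ k : ℕ, 1 ≤ k → ∃ L : List ℤ, HGood L ∧ L ≠ [] ∧
    (hcont L = 3^k ∨ hcont L = -(3^k)) := by
  intro k hk
  match k, hk with
  | 1, _ =>
    refine ⟨[3], ?_, by simp, Or.inl (by decide)⟩
    exact ⟨trivial, by omega, by omega, by omega, by omega⟩
  | 2, _ =>
    refine ⟨[5, -2], ?_, by simp, Or.inr (by decide)⟩
    refine ⟨⟨trivial, by omega, by omega, by omega, ?_⟩, by omega, by omega, by omega, by omega⟩
    intro _; show cfv [] ≤ 0; norm_num [cfv]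
  | (n+3), _ =>
    obtain ⟨a, c, Mid, ha, hc, hMid, hcont3⟩ := PW_all (n+3) (by omega)
    refine ⟨a :: Mid ++ [c], ?_, by simp, hcont3⟩
    apply strong_good
    intro b hb
    simp only [List.mem_cons, List.mem_append, List.mem_singleton] at hb
    rcases hb with (rfl | h) | rfl | h
    · omega
    · exact hMid b h
    · omega
    · exact absurd h List.not_mem_nil

/-! ### Assembly -/

lemma key (k : ℕ) (hk : 1 ≤ k) (a : ℤ) (L : List ℤ) (hG : HGood L) (hne : L ≠ [])
    (hv : ((a : ℂ) / ((3:ℂ)^k)) = ((cfv L : ℝ) : ℂ)) (h3 : ¬ (3:ℤ) ∣ a) :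
    a ≠ 0 ∧ ¬ (3 ∣ a) ∧
      ((a : ℂ) / ((3 : ℂ) ^ k)) ∈ Fdom ∧
      ∀ n : ℕ, gaussT^[n] ((a : ℂ) / ((3 : ℂ) ^ k)) ≠ 0 →
        ‖nearestGaussian (gaussT^[n] ((a : ℂ) / ((3 : ℂ) ^ k)))⁻¹‖ ≤ 8 := by
  have ha0 : a ≠ 0 := by
    rintro rfl
    exact h3 (dvd_zero 3)
  refine ⟨ha0, h3, ?_, ?_⟩
  · show nearestGaussian _ = 0
    rw [hv]
    obtain ⟨hlo, hhi⟩ := hgood_bound L hG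
    exact nearestGaussian_small hlo hhi
  · intro n hn
    rw [hv] at hn ⊢
    rw [gaussT_iterate n L hG] at hn ⊢
    set D := L.drop n with hD
    have hDne : D ≠ [] := by
      intro h0
      rw [h0] at hn
      exact hn (by norm_num [cfv])
    obtain ⟨b, R, hbR⟩ := List.exists_cons_of_ne_nil hDne
    have hGD : HGood D := hgood_drop n L hG
    rw [hbR] at hGD ⊢
    have hb8 : b.natAbs ≤ 8 := hGD.2.2.1
    have hbnd := hgood_bound R hGD.1
    have hinv : (((cfv (b :: R) : ℝ) : ℂ))⁻¹ = (((b:ℝ) + cfv R : ℝ) : ℂ) := by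
      rw [← Complex.ofReal_inv]
      congr 1
      show (((b:ℝ) + cfv R)⁻¹)⁻¹ = _
      rw [inv_inv]
    rw [hinv, nearestGaussian_real_int hbnd.1 hbnd.2]
    rw [Complex.norm_intCast]
    have : |b| ≤ (8:ℤ) := by rw [Int.abs_eq_natAbs]; omega
    calc |((b:ℤ):ℝ)| = ((|b| : ℤ) : ℝ) := by push_cast; rfl
    _ ≤ ((8:ℤ):ℝ) := by exact_mod_cast this
    _ = 8 := by norm_num

theorem stmt12 (k : ℕ) (hk : 1 ≤ k) :
    ∃ a : ℤ, a ≠ 0 ∧ ¬ (3 ∣ a) ∧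
      ((a : ℂ) / ((3 : ℂ) ^ k)) ∈ Fdom ∧
      ∀ n : ℕ, gaussT^[n] ((a : ℂ) / ((3 : ℂ) ^ k)) ≠ 0 →
        ‖nearestGaussian (gaussT^[n] ((a : ℂ) / ((3 : ℂ) ^ k)))⁻¹‖ ≤ 8 := by
  obtain ⟨L, hG, hne, hcont3⟩ := exists_word k hk
  obtain ⟨hm, hcne⟩ := cfv_mul_hcont L hG
  have hcop := hcont_coprime L
  have h3k : (3:ℤ) ∣ hcont L := by
    rcases hcont3 with h | h
    · rw [h]; exact dvd_pow_self 3 (by omega)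
    · rw [h]; exact (dvd_neg).mpr (dvd_pow_self 3 (by omega))
  have h3num : ¬ (3:ℤ) ∣ hnum L := by
    intro hdvd
    have := hcop.isUnit_of_dvd' hdvd h3k
    rw [Int.isUnit_iff] at this
    omega
  -- value of word as a fraction
  have hfrac : ((hnum L : ℝ) / (hcont L : ℝ)) = cfv L := by
    rw [← hm]
    field_simp
  have hcR : ((hcont L : ℤ) : ℝ) ≠ 0 := by exact_mod_cast hcne
  rcases hcont3 with h | h
  · refine ⟨hnum L, key k hk _ L hG hne ?_ h3num⟩
    have : ((hnum L : ℂ) / ((3:ℂ)^k)) = (((hnum L : ℝ) / (hcont L : ℝ) : ℝ) : ℂ) := by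
      rw [h]
      push_cast
      ring
    rw [this, hfrac]
  · refine ⟨-hnum L, key k hk _ L hG hne ?_ (by rwa [dvd_neg])⟩
    have : (((-hnum L : ℤ) : ℂ) / ((3:ℂ)^k)) = (((hnum L : ℝ) / (hcont L : ℝ) : ℝ) : ℂ) := by
      rw [h]
      push_cast
      rw [div_neg]
      ring
    rw [this, hfrac]
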